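/- If distribution A on ℝ second-order stochastically dominates distribution B (i.e., ∫_{-∞}^x (F_B(t) - F_A(t)) dt ≥ 0 for all x) and A and B have the same finite mean, then for every convex function f : ℝ → ℝ (for which both expectations exist), E_{x~B}[f(x)] ≥ E_{x~A}[f(x)]. -/

import Mathlib

open MeasureTheory

open Set MeasureTheory Filter Topology
open scoped ENNReal NNReal

noncomputable def rder (f : ℝ → ℝ) (x : ℝ) : ℝ := sInf (slope f x '' Set.Ioi x)

section rder
variable {f : ℝ → ℝ} (hf : ConvexOn ℝ Set.univ f)
include hf

lemma slope_mono' (a : ℝ) : MonotoneOn (slope f a) {a}ᶜ := by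
  intro x hx y hy hxy
  have := hf.secant_mono (a := a) (x := x) (y := y) trivial trivial trivial hx hy hxy
  simpa [slope_def_field, div_eq_iff] using this

lemma bddBelow_slope (a : ℝ) : BddBelow (slope f a '' Set.Ioi a) := by
  refine ⟨slope f a (a - 1), ?_⟩
  rintro z ⟨y, hy, rfl⟩
  exact slope_mono' hf a (by simp) (ne_of_gt hy) (by linarith [mem_Ioi.mp hy])

lemma rder_le_slope {x y : ℝ} (hxy : x < y) : rder f x ≤ slope f x y :=
  csInf_le (bddBelow_slope hf x) ⟨y, hxy, rfl⟩

lemma slope_le_rder {x y : ℝ} (hyx : y < x) : slope f x y ≤ rder f x := by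
  refine le_csInf ⟨slope f x (x + 1), ⟨x + 1, by simp, rfl⟩⟩ ?_
  rintro z ⟨w, hw, rfl⟩
  exact slope_mono' hf x (ne_of_lt hyx) (ne_of_gt hw) (le_of_lt (hyx.trans hw))

lemma rder_mono : Monotone (rder f) := by
  intro x y hxy
  rcases eq_or_lt_of_le hxy with rfl | hxy
  · exact le_refl _
  refine (rder_le_slope hf hxy).trans ?_
  rw [slope_comm]
  exact slope_le_rder hf hxy

lemma support_line (x y : ℝ) : f x + rder f x * (y - x) ≤ f y := by
  rcases lt_trichotomy x y with h | rfl | h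
  · have := rder_le_slope hf h
    rw [slope_def_field] at this
    have hxy : (0:ℝ) < y - x := by linarith
    rw [le_div_iff₀ hxy] at this
    linarith
  · simp
  · have := slope_le_rder hf h
    rw [slope_def_field] at this
    have hxy : y - x < 0 := by linarith
    rw [div_le_iff_of_neg (by linarith : y - x < 0)] at this
    linarith
lemma tendsto_slope_rder (x : ℝ) :
    Tendsto (slope f x) (𝓝[>] x) (𝓝 (rder f x)) := by
  have Mf : MonotoneOn (slope f x) (Ioi x) :=
    (slope_mono' hf x).mono (fun y hy => ne_of_gt hy)
  exact MonotoneOn.tendsto_nhdsGT Mf (bddBelow_slope hf x)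

lemma hasDerivWithinAt_rder (x : ℝ) :
    HasDerivWithinAt f (rder f x) (Ioi x) x := by
  rw [hasDerivWithinAt_iff_tendsto_slope]
  have : Ioi x \ {x} = Ioi x := by
    simp [Set.diff_singleton_eq_self]
  rw [this]
  exact tendsto_slope_rder hf x

lemma cont_of_convex : Continuous f := by
  rw [← continuousOn_univ]
  exact hf.continuousOn isOpen_univ

lemma rder_ftc {a b : ℝ} (hab : a ≤ b) :
    ∫ u in a..b, rder f u = f b - f a := by
  refine intervalIntegral.integral_eq_sub_of_hasDeriv_right_of_le hab
    ((cont_of_convex hf).continuousOn) (fun x _ => hasDerivWithinAt_rder hf x) ?_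
  exact (rder_mono hf).intervalIntegrable

lemma rder_rightcont (x : ℝ) : ContinuousWithinAt (rder f) (Ici x) x := by
  rw [← continuousWithinAt_Ioi_iff_Ici]
  have h1 : Tendsto (rder f) (𝓝[>] x) (𝓝 (sInf (rder f '' Ioi x))) :=
    Monotone.tendsto_nhdsGT (rder_mono hf) x
  have h2 : sInf (rder f '' Ioi x) = rder f x := by
    apply le_antisymm
    · -- sInf ≤ rder f x = sInf of slopes
      refine le_csInf ⟨slope f x (x+1), ⟨x+1, by simp, rfl⟩⟩ ?_
      rintro z ⟨y, hy, rfl⟩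
      -- show sInf (rder f '' Ioi x) ≤ slope f x y for y > x
      have hy' : x < y := hy
      have hev : ∀ᶠ t in 𝓝[>] x, sInf (rder f '' Ioi x) ≤ slope f t y := by
        filter_upwards [Ioo_mem_nhdsGT_of_mem (Set.left_mem_Ico.mpr hy')] with t ht
        calc sInf (rder f '' Ioi x) ≤ rder f t :=
              csInf_le ((rder_mono hf).map_bddBelow bddBelow_Ioi) ⟨t, ht.1, rfl⟩
          _ ≤ slope f t y := rder_le_slope hf ht.2
      have hcont : Tendsto (fun t => slope f t y) (𝓝[>] x) (𝓝 (slope f x y)) := by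
        apply Tendsto.mono_left _ nhdsWithin_le_nhds
        have hca : ContinuousAt (fun t => (f y - f t) / (y - t)) x := by
          apply ContinuousAt.div
          · exact (continuous_const.sub (cont_of_convex hf)).continuousAt
          · exact (continuous_const.sub continuous_id).continuousAt
          · simpa using sub_ne_zero_of_ne (ne_of_gt hy')
        have heq : (fun t => slope f t y) = fun t => (f y - f t) / (y - t) := by
          funext t; rw [slope_def_field]
        rw [heq, slope_def_field]
        exact hca.tendsto
      exact ge_of_tendsto hcont hev
    · refine le_csInf ⟨rder f (x+1), ⟨x+1, by simp, rfl⟩⟩ ?_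
      rintro z ⟨y, hy, rfl⟩
      exact rder_mono hf (le_of_lt hy)
  rw [h2] at h1
  exact h1.mono_left (by exact le_refl _)
end rder

noncomputable def stf {f : ℝ → ℝ} (hf : ConvexOn ℝ Set.univ f) : StieltjesFunction ℝ :=
  ⟨rder f, rder_mono hf, rder_rightcont hf⟩

noncomputable def khinge (x t : ℝ) : ℝ≥0∞ :=
  ENNReal.ofReal (if 0 < t then max (x - t) 0 else max (t - x) 0)

lemma khinge_measurable : Measurable (Function.uncurry khinge) := by
  apply ENNReal.measurable_ofReal.comp
  apply Measurable.ite (measurableSet_lt measurable_const measurable_snd)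
  · exact ((measurable_fst.sub measurable_snd).max measurable_const)
  · exact ((measurable_snd.sub measurable_fst).max measurable_const)

section rep
variable {f : ℝ → ℝ} (hf : ConvexOn ℝ Set.univ f)
include hf

lemma rep_nonneg (x : ℝ) : 0 ≤ f x - f 0 - rder f 0 * x := by
  have := support_line hf 0 x
  simp only [sub_zero] at this
  linarith

lemma rep (x : ℝ) :
    ∫⁻ t, khinge x t ∂(stf hf).measure = ENNReal.ofReal (f x - f 0 - rder f 0 * x) := by
  set ν := (stf hf).measure with hν
  rcases le_or_gt 0 x with hx | hx
  · -- case 0 ≤ x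
    have hind : (fun t => khinge x t) =
        (Ioc 0 x).indicator (fun t => ENNReal.ofReal (x - t)) := by
      funext t
      rcases lt_or_ge 0 t with ht | ht
      · rcases le_or_gt t x with htx | htx
        · rw [Set.indicator_of_mem (show t ∈ Ioc 0 x from ⟨ht, htx⟩)]
          simp only [khinge, if_pos ht, max_eq_left (by linarith : (0:ℝ) ≤ x - t)]
        · rw [Set.indicator_of_notMem (fun h => absurd h.2 (not_le.mpr htx))]
          simp [khinge, if_pos ht, max_eq_right (by linarith : x - t ≤ 0)]
      · rw [Set.indicator_of_notMem (fun h => absurd h.1 (not_lt.mpr ht))]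
        simp [khinge, if_neg (not_lt.mpr ht), max_eq_right (by linarith : t - x ≤ 0)]
    have hstep : ∫⁻ t, khinge x t ∂ν = ∫⁻ t in Ioc 0 x, ENNReal.ofReal (x - t) ∂ν := by
      rw [← lintegral_indicator measurableSet_Ioc _]
      exact lintegral_congr (fun t => congrFun hind t)
    rw [hstep]
    have h1 : ∫⁻ t in Ioc 0 x, ENNReal.ofReal (x - t) ∂ν
        = ∫⁻ t in Ioc 0 x, ∫⁻ u in Ico 0 x, (if t ≤ u then (1:ℝ≥0∞) else 0) ∂volume ∂ν := by
      refine setLIntegral_congr_fun measurableSet_Ioc (fun t ht => ?_)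
      have : (fun u => if t ≤ u then (1:ℝ≥0∞) else 0) = (Ici t).indicator (fun _ => 1) := by
        funext u; by_cases h : t ≤ u <;> simp [h, Set.indicator_apply]
      rw [this, lintegral_indicator measurableSet_Ici _, setLIntegral_one,
        Measure.restrict_apply measurableSet_Ici]
      have hset : Ici t ∩ Ico 0 x = Ico t x := by
        ext u; simp only [mem_inter_iff, mem_Ici, mem_Ico]
        constructor
        · rintro ⟨h1, h2, h3⟩; exact ⟨h1, h3⟩
        · rintro ⟨h1, h2⟩; exact ⟨h1, le_trans (le_of_lt ht.1) h1, h2⟩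
      rw [hset, Real.volume_Ico]
    rw [h1]
    have hswap : ∫⁻ t in Ioc 0 x, ∫⁻ u in Ico 0 x, (if t ≤ u then (1:ℝ≥0∞) else 0) ∂volume ∂ν
        = ∫⁻ u in Ico 0 x, ∫⁻ t in Ioc 0 x, (if t ≤ u then (1:ℝ≥0∞) else 0) ∂ν ∂volume := by
      apply lintegral_lintegral_swap
      apply Measurable.aemeasurable
      exact Measurable.ite (measurableSet_le measurable_fst measurable_snd)
        measurable_const measurable_const
    rw [hswap]
    have h2 : ∫⁻ u in Ico 0 x, ∫⁻ t in Ioc 0 x, (if t ≤ u then (1:ℝ≥0∞) else 0) ∂ν ∂volume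
        = ∫⁻ u in Ico 0 x, ENNReal.ofReal (rder f u - rder f 0) ∂volume := by
      refine setLIntegral_congr_fun measurableSet_Ico (fun u hu => ?_)
      have : (fun t => if t ≤ u then (1:ℝ≥0∞) else 0) = (Iic u).indicator (fun _ => 1) := by
        funext t; by_cases h : t ≤ u <;> simp [h, Set.indicator_apply]
      rw [this, lintegral_indicator measurableSet_Iic _, setLIntegral_one,
        Measure.restrict_apply measurableSet_Iic]
      have hset : Iic u ∩ Ioc 0 x = Ioc 0 u := by
        ext t; simp only [mem_inter_iff, mem_Iic, mem_Ioc]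
        constructor
        · rintro ⟨h1, h2, h3⟩; exact ⟨h2, h1⟩
        · rintro ⟨h1, h2⟩; exact ⟨h2, h1, le_trans h2 (le_of_lt hu.2)⟩
      rw [hset, hν, StieltjesFunction.measure_Ioc]
      rfl
    rw [h2]
    have hIcoIoc : volume.restrict (Ico 0 x) = volume.restrict (Ioc 0 x) := by
      refine Measure.restrict_congr_set ?_
      exact (Ico_ae_eq_Icc).trans (Ioc_ae_eq_Icc).symm
    rw [hIcoIoc]
    have hint : IntegrableOn (fun u => rder f u - rder f 0) (Ioc 0 x) volume := by
      apply Integrable.sub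
      · exact (intervalIntegrable_iff_integrableOn_Ioc_of_le hx).mp
          ((rder_mono hf).intervalIntegrable)
      · exact (integrableOn_const_iff).mpr (Or.inr measure_Ioc_lt_top)
    have hnn : 0 ≤ᵐ[volume.restrict (Ioc 0 x)] fun u => rder f u - rder f 0 := by
      refine (ae_restrict_iff' measurableSet_Ioc).mpr (ae_of_all _ fun u hu => ?_)
      have := rder_mono hf (le_of_lt hu.1)
      show (0:ℝ) ≤ rder f u - rder f 0
      linarith
    rw [← MeasureTheory.ofReal_integral_eq_lintegral_ofReal hint hnn]
    congr 1
    have : ∫ u in Ioc 0 x, (rder f u - rder f 0) ∂volume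
        = (∫ u in (0:ℝ)..x, rder f u) - rder f 0 * x := by
      rw [intervalIntegral.integral_of_le hx, integral_sub]
      · congr 1
        rw [integral_const]
        simp only [measureReal_def, MeasurableSet.univ, Measure.restrict_apply, Set.univ_inter,
          Real.volume_Ioc, smul_eq_mul, sub_zero]
        rw [ENNReal.toReal_ofReal hx, mul_comm]
      · exact (intervalIntegrable_iff_integrableOn_Ioc_of_le hx).mp
          ((rder_mono hf).intervalIntegrable)
      · exact (integrableOn_const_iff).mpr (Or.inr measure_Ioc_lt_top)
    rw [this, rder_ftc hf hx]
  · -- case x < 0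
    have hx' : x ≤ 0 := le_of_lt hx
    have hind : (fun t => khinge x t) =
        (Ioc x 0).indicator (fun t => ENNReal.ofReal (t - x)) := by
      funext t
      rcases lt_or_ge 0 t with ht | ht
      · rw [Set.indicator_of_notMem (fun h => absurd h.2 (not_le.mpr ht))]
        simp [khinge, if_pos ht, max_eq_right (by linarith : x - t ≤ 0)]
      · rcases lt_or_ge x t with htx | htx
        · rw [Set.indicator_of_mem (show t ∈ Ioc x 0 from ⟨htx, ht⟩)]
          simp only [khinge, if_neg (not_lt.mpr ht),
            max_eq_left (by linarith : (0:ℝ) ≤ t - x)]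
        · rw [Set.indicator_of_notMem (fun h => absurd h.1 (not_lt.mpr htx))]
          simp [khinge, if_neg (not_lt.mpr ht), max_eq_right (by linarith : t - x ≤ 0)]
    have hstep : ∫⁻ t, khinge x t ∂ν = ∫⁻ t in Ioc x 0, ENNReal.ofReal (t - x) ∂ν := by
      rw [← lintegral_indicator measurableSet_Ioc _]
      exact lintegral_congr (fun t => congrFun hind t)
    rw [hstep]
    have h1 : ∫⁻ t in Ioc x 0, ENNReal.ofReal (t - x) ∂ν
        = ∫⁻ t in Ioc x 0, ∫⁻ u in Ico x 0, (if u < t then (1:ℝ≥0∞) else 0) ∂volume ∂ν := by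
      refine setLIntegral_congr_fun measurableSet_Ioc (fun t ht => ?_)
      have : (fun u => if u < t then (1:ℝ≥0∞) else 0) = (Iio t).indicator (fun _ => 1) := by
        funext u; by_cases h : u < t <;> simp [h, Set.indicator_apply]
      rw [this, lintegral_indicator measurableSet_Iio _, setLIntegral_one,
        Measure.restrict_apply measurableSet_Iio]
      have hset : Iio t ∩ Ico x 0 = Ico x t := by
        ext u; simp only [mem_inter_iff, mem_Iio, mem_Ico]
        constructor
        · rintro ⟨ha, hb, hc⟩; exact ⟨hb, ha⟩
        · rintro ⟨ha, hb⟩; exact ⟨hb, ha, lt_of_lt_of_le hb ht.2⟩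
      rw [hset, Real.volume_Ico]
    rw [h1]
    have hswap : ∫⁻ t in Ioc x 0, ∫⁻ u in Ico x 0, (if u < t then (1:ℝ≥0∞) else 0) ∂volume ∂ν
        = ∫⁻ u in Ico x 0, ∫⁻ t in Ioc x 0, (if u < t then (1:ℝ≥0∞) else 0) ∂ν ∂volume := by
      apply lintegral_lintegral_swap
      apply Measurable.aemeasurable
      exact Measurable.ite (measurableSet_lt measurable_snd measurable_fst)
        measurable_const measurable_const
    rw [hswap]
    have h2 : ∫⁻ u in Ico x 0, ∫⁻ t in Ioc x 0, (if u < t then (1:ℝ≥0∞) else 0) ∂ν ∂volume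
        = ∫⁻ u in Ico x 0, ENNReal.ofReal (rder f 0 - rder f u) ∂volume := by
      refine setLIntegral_congr_fun measurableSet_Ico (fun u hu => ?_)
      have : (fun t => if u < t then (1:ℝ≥0∞) else 0) = (Ioi u).indicator (fun _ => 1) := by
        funext t; by_cases h : u < t <;> simp [h, Set.indicator_apply]
      rw [this, lintegral_indicator measurableSet_Ioi _, setLIntegral_one,
        Measure.restrict_apply measurableSet_Ioi]
      have hset : Ioi u ∩ Ioc x 0 = Ioc u 0 := by
        ext t; simp only [mem_inter_iff, mem_Ioi, mem_Ioc]
        constructor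
        · rintro ⟨ha, hb, hc⟩; exact ⟨ha, hc⟩
        · rintro ⟨ha, hb⟩; exact ⟨ha, lt_of_le_of_lt hu.1 ha, hb⟩
      rw [hset, hν, StieltjesFunction.measure_Ioc]
      rfl
    rw [h2]
    have hIcoIoc : volume.restrict (Ico x 0) = volume.restrict (Ioc x 0) := by
      refine Measure.restrict_congr_set ?_
      exact (Ico_ae_eq_Icc).trans (Ioc_ae_eq_Icc).symm
    rw [hIcoIoc]
    have hint : IntegrableOn (fun u => rder f 0 - rder f u) (Ioc x 0) volume := by
      apply Integrable.sub
      · exact (integrableOn_const_iff).mpr (Or.inr measure_Ioc_lt_top)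
      · exact (intervalIntegrable_iff_integrableOn_Ioc_of_le hx').mp
          ((rder_mono hf).intervalIntegrable)
    have hnn : 0 ≤ᵐ[volume.restrict (Ioc x 0)] fun u => rder f 0 - rder f u := by
      refine (ae_restrict_iff' measurableSet_Ioc).mpr (ae_of_all _ fun u hu => ?_)
      have := rder_mono hf hu.2
      show (0:ℝ) ≤ rder f 0 - rder f u
      linarith
    rw [← MeasureTheory.ofReal_integral_eq_lintegral_ofReal hint hnn]
    congr 1
    have : ∫ u in Ioc x 0, (rder f 0 - rder f u) ∂volume
        = rder f 0 * (-x) - (∫ u in x..(0:ℝ), rder f u) := by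
      rw [intervalIntegral.integral_of_le hx', integral_sub]
      · congr 1
        rw [integral_const]
        simp only [measureReal_def, MeasurableSet.univ, Measure.restrict_apply, Set.univ_inter,
          Real.volume_Ioc, smul_eq_mul, zero_sub]
        rw [ENNReal.toReal_ofReal (by linarith : (0:ℝ) ≤ -x), mul_comm]
      · exact (integrableOn_const_iff).mpr (Or.inr measure_Ioc_lt_top)
      · exact (intervalIntegrable_iff_integrableOn_Ioc_of_le hx').mp
          ((rder_mono hf).intervalIntegrable)
    rw [this, rder_ftc hf hx']
    ring
end rep

section hinge
variable (μ : Measure ℝ) [IsProbabilityMeasure μ]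

lemma hinge_integrable_left (hint : Integrable (fun x : ℝ => x) μ) (t : ℝ) :
    Integrable (fun x => max (t - x) 0) μ := by
  apply Integrable.mono ((integrable_const |t|).add hint.abs)
  · exact ((continuous_const.sub continuous_id).max continuous_const).aestronglyMeasurable
  · refine ae_of_all _ fun x => ?_
    simp only [Real.norm_eq_abs]
    rw [abs_of_nonneg (le_max_right _ _)]
    have h1 : max (t - x) 0 ≤ |t| + |x| := by
      rcases le_total (t - x) 0 with h | h
      · rw [max_eq_right h]; positivity
      · rw [max_eq_left h]
        calc t - x ≤ |t - x| := le_abs_self _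
          _ ≤ |t| + |x| := abs_sub _ _
    exact h1.trans (le_abs_self _)

lemma hinge_integrable_right (hint : Integrable (fun x : ℝ => x) μ) (t : ℝ) :
    Integrable (fun x => max (x - t) 0) μ := by
  apply Integrable.mono ((integrable_const |t|).add hint.abs)
  · exact ((continuous_id.sub continuous_const).max continuous_const).aestronglyMeasurable
  · refine ae_of_all _ fun x => ?_
    simp only [Real.norm_eq_abs]
    rw [abs_of_nonneg (le_max_right _ _)]
    have h1 : max (x - t) 0 ≤ |t| + |x| := by
      rcases le_total (x - t) 0 with h | h
      · rw [max_eq_right h]; positivity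
      · rw [max_eq_left h]
        calc x - t ≤ |x - t| := le_abs_self _
          _ ≤ |x| + |t| := abs_sub _ _
          _ = |t| + |x| := add_comm _ _
    exact h1.trans (le_abs_self _)

lemma cdf_measurable : Measurable (fun s : ℝ => μ (Iic s)) :=
  Monotone.measurable (fun _ _ hab => measure_mono (Iic_subset_Iic.mpr hab))

lemma hinge_lintegral_eq (t : ℝ) :
    ∫⁻ x, ENNReal.ofReal (max (t - x) 0) ∂μ = ∫⁻ s in Iic t, μ (Iic s) ∂volume := by
  have hlc := lintegral_eq_lintegral_meas_le μ
    (ae_of_all _ fun x : ℝ => le_max_right (t - x) 0)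
    ((continuous_const.sub continuous_id).max continuous_const).measurable.aemeasurable
  rw [hlc]
  have h1 : ∫⁻ s in Ioi 0, μ {a : ℝ | s ≤ max (t - a) 0} ∂volume
      = ∫⁻ s in Ioi 0, μ (Iic (t - s)) ∂volume := by
    refine setLIntegral_congr_fun measurableSet_Ioi (fun s hs => ?_)
    congr 1
    ext a
    simp only [mem_setOf_eq, mem_Iic]
    constructor
    · intro h
      rcases max_cases (t - a) 0 with ⟨he, _⟩ | ⟨he, _⟩
      · rw [he] at h; linarith
      · rw [he] at h; exact absurd h (not_le.mpr hs)
    · intro h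
      have : s ≤ t - a := by linarith
      exact this.trans (le_max_left _ _)
  rw [h1]
  have hmp : MeasurePreserving (fun s : ℝ => t - s) volume volume :=
    Measure.measurePreserving_sub_left volume t
  have hemb : MeasurableEmbedding (fun s : ℝ => t - s) :=
    (MeasurableEquiv.subLeft t).measurableEmbedding
  have hpre : (fun s : ℝ => t - s) ⁻¹' (Iio t) = Ioi 0 := by
    ext s; simp only [mem_preimage, mem_Iio, mem_Ioi]
    constructor <;> intro h <;> linarith
  have h2 := hmp.setLIntegral_comp_preimage_emb hemb (fun u => μ (Iic u)) (Iio t)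
  rw [hpre] at h2
  rw [h2]
  exact setLIntegral_congr Iio_ae_eq_Iic

lemma hinge_integral_eq (hint : Integrable (fun x : ℝ => x) μ) (t : ℝ) :
    ∫ x, max (t - x) 0 ∂μ = ∫ s in Iic t, (μ (Iic s)).toReal ∂volume := by
  have hnn : 0 ≤ᵐ[μ] fun x => max (t - x) 0 := ae_of_all _ fun x => le_max_right _ _
  have hm : AEStronglyMeasurable (fun x => max (t - x) 0) μ :=
    ((continuous_const.sub continuous_id).max continuous_const).aestronglyMeasurable
  rw [integral_eq_lintegral_of_nonneg_ae hnn hm]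
  rw [hinge_lintegral_eq μ t]
  rw [integral_toReal ((cdf_measurable μ).aemeasurable.restrict)
    (ae_of_all _ fun s => measure_lt_top μ _)]

lemma cdf_integrableOn (hint : Integrable (fun x : ℝ => x) μ) (t : ℝ) :
    IntegrableOn (fun s => (μ (Iic s)).toReal) (Iic t) volume := by
  refine integrable_toReal_of_lintegral_ne_top ((cdf_measurable μ).aemeasurable.restrict) ?_
  rw [← hinge_lintegral_eq μ t]
  have hfi := (hinge_integrable_left μ hint t).2
  have hnn : 0 ≤ᵐ[μ] fun x => max (t - x) 0 := ae_of_all _ fun x => le_max_right _ _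
  rw [hasFiniteIntegral_iff_ofReal hnn] at hfi
  exact hfi.ne

end hinge

lemma rep_measure (μ : Measure ℝ) [IsProbabilityMeasure μ]
    (hint : Integrable (fun x : ℝ => x) μ)
    {f : ℝ → ℝ} (hf : ConvexOn ℝ Set.univ f) (hfi : Integrable f μ) :
    (∫⁻ t, ∫⁻ x, khinge x t ∂μ ∂(stf hf).measure)
      = ENNReal.ofReal (∫ x, f x ∂μ - f 0 - rder f 0 * ∫ x, x ∂μ)
    ∧ 0 ≤ ∫ x, f x ∂μ - f 0 - rder f 0 * ∫ x, x ∂μ := by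
  set ν := (stf hf).measure with hν
  set φ : ℝ → ℝ := fun x => f x - f 0 - rder f 0 * x with hφ
  have hφint : Integrable φ μ := by
    apply Integrable.sub (hfi.sub (integrable_const (f 0)))
    exact hint.const_mul (rder f 0)
  have hφnn : ∀ x, 0 ≤ φ x := fun x => rep_nonneg hf x
  have hswap : ∫⁻ t, ∫⁻ x, khinge x t ∂μ ∂ν = ∫⁻ x, ∫⁻ t, khinge x t ∂ν ∂μ := by
    exact (lintegral_lintegral_swap khinge_measurable.aemeasurable).symm
  have hpt : ∫⁻ x, ∫⁻ t, khinge x t ∂ν ∂μ = ∫⁻ x, ENNReal.ofReal (φ x) ∂μ :=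
    lintegral_congr (fun x => rep hf x)
  have hor : ∫⁻ x, ENNReal.ofReal (φ x) ∂μ = ENNReal.ofReal (∫ x, φ x ∂μ) :=
    (ofReal_integral_eq_lintegral_ofReal hφint (ae_of_all _ hφnn)).symm
  have hval : ∫ x, φ x ∂μ = ∫ x, f x ∂μ - f 0 - rder f 0 * ∫ x, x ∂μ := by
    have e1 : Integrable (fun x : ℝ => f x - f 0) μ := hfi.sub (integrable_const (f 0))
    have e2 : Integrable (fun x : ℝ => rder f 0 * x) μ := hint.const_mul (rder f 0)
    calc ∫ x, φ x ∂μ = (∫ x, (f x - f 0) ∂μ) - ∫ x, rder f 0 * x ∂μ := integral_sub e1 e2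
      _ = (∫ x, f x ∂μ - ∫ _x, f 0 ∂μ) - rder f 0 * ∫ x, x ∂μ := by
          rw [integral_sub hfi (integrable_const (f 0)), MeasureTheory.integral_const_mul]
      _ = ∫ x, f x ∂μ - f 0 - rder f 0 * ∫ x, x ∂μ := by
          rw [integral_const]; simp [measure_univ]
  constructor
  · rw [hswap, hpt, hor, hval]
  · rw [← hval]
    exact integral_nonneg hφnn

/-- If distribution A second-order stochastically dominates B (the integral of the CDF
difference F_B - F_A over (-∞, x] is nonnegative for all x) and A and B have equal
finite means, then E_{x~B}[f(x)] ≥ E_{x~A}[f(x)] for every convex f for which both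
expectations exist. -/
theorem sosd_convex_expectation (μA μB : Measure ℝ)
    [IsProbabilityMeasure μA] [IsProbabilityMeasure μB]
    (hdom : ∀ x : ℝ,
      0 ≤ ∫ t in Set.Iic x, ((μB (Set.Iic t)).toReal - (μA (Set.Iic t)).toReal))
    (hintA : Integrable (fun x : ℝ => x) μA) (hintB : Integrable (fun x : ℝ => x) μB)
    (hmean : ∫ x, x ∂μA = ∫ x, x ∂μB)
    (f : ℝ → ℝ) (hf : ConvexOn ℝ Set.univ f)
    (hfA : Integrable f μA) (hfB : Integrable f μB) :
    ∫ x, f x ∂μA ≤ ∫ x, f x ∂μB := by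
  -- hinge comparison, left version
  have keyL : ∀ t : ℝ, ∫ x, max (t - x) 0 ∂μA ≤ ∫ x, max (t - x) 0 ∂μB := by
    intro t
    rw [hinge_integral_eq μA hintA t, hinge_integral_eq μB hintB t]
    have h := hdom t
    rw [integral_sub (cdf_integrableOn μB hintB t) (cdf_integrableOn μA hintA t)] at h
    linarith
  -- hinge comparison, right version
  have hrel : ∀ (μ : Measure ℝ) [IsProbabilityMeasure μ],
      Integrable (fun x : ℝ => x) μ → ∀ t : ℝ,
      ∫ x, max (x - t) 0 ∂μ = (∫ x, max (t - x) 0 ∂μ) + (∫ x, x ∂μ) - t := by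
    intro μ _ hint t
    have hfun : (fun x : ℝ => max (x - t) 0) = fun x => max (t - x) 0 + (x - t) := by
      funext x; rcases le_total x t with h | h
      · rw [max_eq_right (by linarith), max_eq_left (by linarith)]; ring
      · rw [max_eq_left (by linarith), max_eq_right (by linarith)]; ring
    have e2 : Integrable (fun x : ℝ => x - t) μ := hint.sub (integrable_const t)
    rw [hfun, integral_add (hinge_integrable_left μ hint t) e2,
      integral_sub hint (integrable_const t), integral_const]
    simp [measure_univ]
    ring
  have keyR : ∀ t : ℝ, ∫ x, max (x - t) 0 ∂μA ≤ ∫ x, max (x - t) 0 ∂μB := by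
    intro t
    rw [hrel μA hintA t, hrel μB hintB t, hmean]
    linarith [keyL t]
  -- lintegral comparison of the kernel
  have hK : ∀ t : ℝ, ∫⁻ x, khinge x t ∂μA ≤ ∫⁻ x, khinge x t ∂μB := by
    intro t
    by_cases ht : 0 < t
    · have h1 : ∀ (μ : Measure ℝ) [IsProbabilityMeasure μ],
          Integrable (fun x : ℝ => x) μ →
          ∫⁻ x, khinge x t ∂μ = ENNReal.ofReal (∫ x, max (x - t) 0 ∂μ) := by
        intro μ _ hint
        have : (fun x => khinge x t) = fun x => ENNReal.ofReal (max (x - t) 0) := by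
          funext x; simp [khinge, if_pos ht]
        rw [this, ← ofReal_integral_eq_lintegral_ofReal (hinge_integrable_right μ hint t)
          (ae_of_all _ fun x => le_max_right _ _)]
      rw [h1 μA hintA, h1 μB hintB]
      exact ENNReal.ofReal_le_ofReal (keyR t)
    · have h1 : ∀ (μ : Measure ℝ) [IsProbabilityMeasure μ],
          Integrable (fun x : ℝ => x) μ →
          ∫⁻ x, khinge x t ∂μ = ENNReal.ofReal (∫ x, max (t - x) 0 ∂μ) := by
        intro μ _ hint
        have : (fun x => khinge x t) = fun x => ENNReal.ofReal (max (t - x) 0) := by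
          funext x; simp [khinge, if_neg ht]
        rw [this, ← ofReal_integral_eq_lintegral_ofReal (hinge_integrable_left μ hint t)
          (ae_of_all _ fun x => le_max_right _ _)]
      rw [h1 μA hintA, h1 μB hintB]
      exact ENNReal.ofReal_le_ofReal (keyL t)
  -- representation and conclusion
  obtain ⟨hA1, hA2⟩ := rep_measure μA hintA hf hfA
  obtain ⟨hB1, hB2⟩ := rep_measure μB hintB hf hfB
  have hmono : (∫⁻ t, ∫⁻ x, khinge x t ∂μA ∂(stf hf).measure)
      ≤ ∫⁻ t, ∫⁻ x, khinge x t ∂μB ∂(stf hf).measure :=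
    lintegral_mono (fun t => hK t)
  rw [hA1, hB1] at hmono
  rw [ENNReal.ofReal_le_ofReal_iff hB2] at hmono
  rw [hmean] at hmono
  linarith
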